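/- If an open graph (G, I, O) has a gflow, then it has a path cover: a collection of vertex-disjoint directed paths in G covering all vertices, such that each path intersects I at most at its initial vertex and intersects O exactly at its final vertex. Moreover each edge of these paths can be chosen to be a real gflow edge of some gflow on (G, I, O), i.e., an edge (x, y) with y ∈ g(x). -/

import Mathlib

variable {V : Type*} [Fintype V] [DecidableEq V]

/-- The odd neighborhood of a vertex set `S`: vertices adjacent to an odd
number of vertices of `S`. -/
def oddNbhd (G : SimpleGraph V) [DecidableRel G.Adj] (S : Finset V) : Finset V :=
  Finset.univ.filter fun v => Odd ((S.filter fun u => G.Adj v u).card)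

/-- A generalized flow (gflow) on the open graph `(G, I, O)`. -/
structure IsGflow (G : SimpleGraph V) [DecidableRel G.Adj] (I O : Finset V)
    (g : V → Finset V) (r : V → V → Prop) : Prop where
  strict : IsStrictOrder V r
  notInput : ∀ u, u ∉ O → ∀ v ∈ g u, v ∉ I
  g1 : ∀ u, u ∉ O → ∀ v ∈ g u, r u v
  g2 : ∀ u, u ∉ O → u ∈ oddNbhd G (g u)
  g3 : ∀ u, u ∉ O → ∀ v ∈ oddNbhd G (g u), v = u ∨ r u v

section Helpers

lemma zmod2_cast_eq_one_iff (n : ℕ) : ((n : ZMod 2) = 1) ↔ Odd n := by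
  rw [Nat.odd_iff, ← ZMod.natCast_mod n 2]
  rcases Nat.mod_two_eq_zero_or_one n with h | h <;> rw [h] <;> simp

lemma zmod2_cast_eq_zero_iff (n : ℕ) : ((n : ZMod 2) = 0) ↔ ¬ Odd n := by
  rw [Nat.odd_iff, ← ZMod.natCast_mod n 2]
  rcases Nat.mod_two_eq_zero_or_one n with h | h <;> rw [h] <;> simp

lemma odd_card_symmDiff (A B : Finset V) :
    Odd ((symmDiff A B).card) ↔ (Odd A.card ↔ ¬ Odd B.card) := by
  have h1 : (symmDiff A B).card = (A \ B).card + (B \ A).card := by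
    rw [symmDiff_def, Finset.sup_eq_union, Finset.card_union_of_disjoint disjoint_sdiff_sdiff]
  have h2 := Finset.card_sdiff_add_card_inter A B
  have h3 := Finset.card_sdiff_add_card_inter B A
  have h4 : (A ∩ B).card = (B ∩ A).card := by rw [Finset.inter_comm]
  simp only [Nat.odd_iff] at *
  omega

lemma mem_oddNbhd_symmDiff (G : SimpleGraph V) [DecidableRel G.Adj] (v : V) (S T : Finset V) :
    v ∈ oddNbhd G (symmDiff S T) ↔ ((v ∈ oddNbhd G S) ↔ ¬ (v ∈ oddNbhd G T)) := by
  unfold oddNbhd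
  simp only [Finset.mem_filter, Finset.mem_univ, true_and]
  have hfil : (symmDiff S T).filter (fun u => G.Adj v u) =
      symmDiff (S.filter (fun u => G.Adj v u)) (T.filter (fun u => G.Adj v u)) := by
    ext y
    simp only [Finset.mem_filter, Finset.mem_symmDiff]
    tauto
  rw [hfil, odd_card_symmDiff]

lemma mem_oddNbhd_iff (G : SimpleGraph V) [DecidableRel G.Adj] (v : V) (S : Finset V) :
    v ∈ oddNbhd G S ↔ Odd ((S.filter fun u => G.Adj v u).card) := by
  unfold oddNbhd
  simp

theorem exists_good [LinearOrder V] (G : SimpleGraph V) [DecidableRel G.Adj] (I O : Finset V)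
    (g : V → Finset V) (r : V → V → Prop) (h : IsGflow G I O g r)
    (hr : ∀ a b, r a b → a < b) :
    ∃ g' : V → Finset V, IsGflow G I O g' (· < · : V → V → Prop) ∧
      ∃ f : {v : V // v ∉ O} → V,
        Function.Injective f ∧
        ∀ v : {v : V // v ∉ O}, f v ∈ g' v.1 ∧ G.Adj v.1 (f v) := by
  classical
  set Hv : V → Finset V :=
    fun v => Finset.univ.filter (fun y => ∃ u, u ∉ O ∧ v ≤ u ∧ y ∈ g u) with hHv
  set A : {v : V // v ∉ O} → Finset V :=
    fun v => G.neighborFinset v.1 ∩ Hv v.1 with hA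
  -- Hall's condition
  have hall : ∀ s : Finset {v : V // v ∉ O}, s.card ≤ (s.biUnion A).card := by
    intro s
    set Y := s.biUnion A with hY
    have hYsub : ∀ (m : {v : V // v ∉ O}), m ∈ s → ∀ (v : {v : V // v ∉ O}), m.1 ≤ v.1 →
        ∀ y, G.Adj m.1 y → y ∈ g v.1 → y ∈ Y := by
      intro m hm v hle y hadj hy
      refine Finset.mem_biUnion.mpr ⟨m, hm, ?_⟩
      rw [hA]
      refine Finset.mem_inter.mpr ⟨?_, ?_⟩
      · exact (SimpleGraph.mem_neighborFinset G m.1 y).mpr hadj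
      · rw [hHv]
        simp only [Finset.mem_filter, Finset.mem_univ, true_and]
        exact ⟨v.1, v.2, hle, hy⟩
    set Φ : Finset {v : V // v ∉ O} → Finset V :=
      fun s' => Y.filter (fun y => (∑ v ∈ s', (if y ∈ g v.1 then (1 : ZMod 2) else 0)) = 1)
      with hΦ
    have hmaps : ∀ s' ∈ s.powerset, Φ s' ∈ Y.powerset := by
      intro s' _
      exact Finset.mem_powerset.mpr (Finset.filter_subset _ _)
    have hinj : Set.InjOn Φ (s.powerset : Finset (Finset {v : V // v ∉ O})) := by
      intro s₁ h₁ s₂ h₂ heq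
      simp only [Finset.coe_powerset, Set.mem_preimage, Set.mem_powerset_iff,
        Finset.coe_subset, Finset.mem_coe, Finset.mem_powerset] at h₁ h₂
      by_contra hne
      have hD : (symmDiff s₁ s₂).Nonempty := by
        rw [Finset.nonempty_iff_ne_empty]
        intro hemp
        exact hne (symmDiff_eq_bot.mp hemp)
      set D := symmDiff s₁ s₂ with hDdef
      set m := D.min' hD with hm
      have hmD : m ∈ D := D.min'_mem hD
      have hmle : ∀ v ∈ D, m ≤ v := fun v hv => D.min'_le v hv
      have hs₁s : s₁ ⊆ s := h₁
      have hs₂s : s₂ ⊆ s := h₂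
      have hDs : D ⊆ s := by
        intro v hv
        rcases Finset.mem_symmDiff.mp hv with ⟨hv1, _⟩ | ⟨hv2, _⟩
        · exact hs₁s hv1
        · exact hs₂s hv2
      have hms : m ∈ s := hDs hmD
      -- pointwise equality
      have hpt : ∀ y ∈ Y, (∑ v ∈ s₁, (if y ∈ g v.1 then (1 : ZMod 2) else 0)) =
          (∑ v ∈ s₂, (if y ∈ g v.1 then (1 : ZMod 2) else 0)) := by
        intro y hy
        have h1 : y ∈ Φ s₁ ↔ y ∈ Φ s₂ := by rw [heq]
        rw [hΦ] at h1
        simp only [Finset.mem_filter, hy, true_and] at h1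
        revert h1
        generalize (∑ v ∈ s₁, (if y ∈ g v.1 then (1 : ZMod 2) else 0)) = a
        generalize (∑ v ∈ s₂, (if y ∈ g v.1 then (1 : ZMod 2) else 0)) = b
        revert a b
        decide
      set c : {v : V // v ∉ O} → ZMod 2 :=
        fun v => ∑ y ∈ Y, (if G.Adj m.1 y ∧ y ∈ g v.1 then 1 else 0) with hc
      have swap : ∀ s' : Finset {v : V // v ∉ O}, (∑ v ∈ s', c v) =
          ∑ y ∈ Y, (if G.Adj m.1 y then (∑ v ∈ s', if y ∈ g v.1 then (1 : ZMod 2) else 0)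
            else 0) := by
        intro s'
        rw [hc, Finset.sum_comm]
        refine Finset.sum_congr rfl fun y _ => ?_
        by_cases hadj : G.Adj m.1 y
        · simp [hadj]
        · simp [hadj]
      have hsum : (∑ v ∈ s₁, c v) = (∑ v ∈ s₂, c v) := by
        rw [swap s₁, swap s₂]
        refine Finset.sum_congr rfl fun y hy => ?_
        by_cases hadj : G.Adj m.1 y
        · simp only [hadj, if_true, hpt y hy]
        · simp [hadj]
      have hcval : ∀ v ∈ s, m.1 ≤ v.1 → c v = (if v = m then 1 else 0) := by
        intro v hvs hmv
        have hYfil : Y.filter (fun y => G.Adj m.1 y ∧ y ∈ g v.1) =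
            (g v.1).filter (fun y => G.Adj m.1 y) := by
          ext y
          simp only [Finset.mem_filter]
          constructor
          · rintro ⟨_, h1, h2⟩
            exact ⟨h2, h1⟩
          · rintro ⟨h2, h1⟩
            exact ⟨hYsub m hms v hmv y h1 h2, h1, h2⟩
        have hcv : c v = (((g v.1).filter (fun y => G.Adj m.1 y)).card : ZMod 2) := by
          rw [hc]
          simp only
          rw [Finset.sum_boole, hYfil]
        by_cases hvm : v = m
        · subst hvm
          rw [hcv, if_pos rfl, zmod2_cast_eq_one_iff]
          have := h.g2 m.1 m.2
          rwa [mem_oddNbhd_iff] at this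
        · have hlt : m.1 < v.1 := by
            refine lt_of_le_of_ne hmv ?_
            intro heq'
            exact hvm (Subtype.ext heq'.symm)
          rw [hcv, if_neg hvm, zmod2_cast_eq_zero_iff]
          intro hodd
          have hmem : m.1 ∈ oddNbhd G (g v.1) := by
            rw [mem_oddNbhd_iff]
            exact hodd
          rcases h.g3 v.1 v.2 m.1 hmem with heq' | hrel
          · exact hlt.ne heq'
          · exact absurd (hr _ _ hrel) (not_lt.mpr hlt.le)
      -- split the sums
      have e₁ := Finset.sum_inter_add_sum_sdiff s₁ s₂ c
      have e₂ := Finset.sum_inter_add_sum_sdiff s₂ s₁ c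
      have hint : (∑ v ∈ s₁ ∩ s₂, c v) = (∑ v ∈ s₂ ∩ s₁, c v) := by
        rw [Finset.inter_comm]
      have hdiffsum : (∑ v ∈ s₁ \ s₂, c v) = (∑ v ∈ s₂ \ s₁, c v) := by
        have : (∑ v ∈ s₁ ∩ s₂, c v) + (∑ v ∈ s₁ \ s₂, c v) =
            (∑ v ∈ s₁ ∩ s₂, c v) + (∑ v ∈ s₂ \ s₁, c v) := by
          rw [e₁, hint, e₂, hsum]
        exact add_left_cancel this
      have hval₁ : (∑ v ∈ s₁ \ s₂, c v) = (if m ∈ s₁ \ s₂ then 1 else 0) := by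
        rw [Finset.sum_congr rfl (fun v hv => ?_)]
        · exact Finset.sum_ite_eq' (s₁ \ s₂) m (fun _ => (1 : ZMod 2))
        · have hvD : v ∈ D := Finset.mem_symmDiff.mpr
            (Or.inl ⟨(Finset.mem_sdiff.mp hv).1, (Finset.mem_sdiff.mp hv).2⟩)
          exact hcval v (hDs hvD) (hmle v hvD)
      have hval₂ : (∑ v ∈ s₂ \ s₁, c v) = (if m ∈ s₂ \ s₁ then 1 else 0) := by
        rw [Finset.sum_congr rfl (fun v hv => ?_)]
        · exact Finset.sum_ite_eq' (s₂ \ s₁) m (fun _ => (1 : ZMod 2))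
        · have hvD : v ∈ D := Finset.mem_symmDiff.mpr
            (Or.inr ⟨(Finset.mem_sdiff.mp hv).1, (Finset.mem_sdiff.mp hv).2⟩)
          exact hcval v (hDs hvD) (hmle v hvD)
      rw [hval₁, hval₂] at hdiffsum
      rcases Finset.mem_symmDiff.mp hmD with ⟨hm1, hm2⟩ | ⟨hm1, hm2⟩
      · rw [if_pos (Finset.mem_sdiff.mpr ⟨hm1, hm2⟩),
          if_neg (fun hh => hm2 (Finset.mem_sdiff.mp hh).1)] at hdiffsum
        exact one_ne_zero hdiffsum
      · rw [if_neg (fun hh => hm2 (Finset.mem_sdiff.mp hh).1),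
          if_pos (Finset.mem_sdiff.mpr ⟨hm1, hm2⟩)] at hdiffsum
        exact zero_ne_one hdiffsum
    have hcard := Finset.card_le_card_of_injOn Φ hmaps hinj
    rw [Finset.card_powerset, Finset.card_powerset] at hcard
    exact (Nat.pow_le_pow_iff_right (by norm_num : 1 < 2)).mp hcard
  obtain ⟨f, hfinj, hfA⟩ := (Finset.all_card_le_biUnion_card_iff_exists_injective A).mp hall
  have hfadj : ∀ v : {v : V // v ∉ O}, G.Adj v.1 (f v) := by
    intro v
    have := hfA v
    rw [hA] at this
    exact (SimpleGraph.mem_neighborFinset G v.1 (f v)).mp (Finset.mem_inter.mp this).1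
  have hHf : ∀ v : {v : V // v ∉ O}, f v ∉ g v.1 → ∃ u, u ∉ O ∧ v.1 < u ∧ f v ∈ g u := by
    intro v hnot
    have h1 := (Finset.mem_inter.mp (hfA v)).2
    rw [hHv] at h1
    simp only [Finset.mem_filter, Finset.mem_univ, true_and] at h1
    obtain ⟨u, hu1, hu2, hu3⟩ := h1
    refine ⟨u, hu1, lt_of_le_of_ne hu2 ?_, hu3⟩
    rintro rfl
    exact hnot hu3
  have hex : ∀ v : V, ∃ S : Finset V,
      ((v ∈ O) → S = g v) ∧
      (∀ hv : v ∉ O, f ⟨v, hv⟩ ∈ S ∧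
        (S = g v ∨ ∃ u, u ∉ O ∧ v < u ∧ S = symmDiff (g v) (g u))) := by
    intro v
    by_cases hv : v ∈ O
    · exact ⟨g v, fun _ => rfl, fun hv' => absurd hv hv'⟩
    · by_cases hf : f ⟨v, hv⟩ ∈ g v
      · exact ⟨g v, fun h' => absurd h' hv, fun hv' => ⟨hf, Or.inl rfl⟩⟩
      · obtain ⟨u, hu1, hu2, hu3⟩ := hHf ⟨v, hv⟩ hf
        refine ⟨symmDiff (g v) (g u), fun h' => absurd h' hv, fun hv' => ⟨?_,
          Or.inr ⟨u, hu1, hu2, rfl⟩⟩⟩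
        exact Finset.mem_symmDiff.mpr (Or.inr ⟨hu3, hf⟩)
  choose g' hg'O hg'mem using hex
  have hsub : ∀ v, v ∉ O → ∀ x ∈ g' v, (x ∈ g v ∨ ∃ u, u ∉ O ∧ v < u ∧ x ∈ g u) := by
    intro v hv x hx
    rcases (hg'mem v hv).2 with heq | ⟨u, hu1, hu2, heq⟩
    · rw [heq] at hx
      exact Or.inl hx
    · rw [heq] at hx
      rcases Finset.mem_symmDiff.mp hx with ⟨h1, _⟩ | ⟨h1, _⟩
      · exact Or.inl h1
      · exact Or.inr ⟨u, hu1, hu2, h1⟩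
  have hnotmemOddHigh : ∀ v u : V, v ∉ O → u ∉ O → v < u → v ∉ oddNbhd G (g u) := by
    intro v u hv hu hlt hmem
    rcases h.g3 u hu v hmem with heq | hrel
    · exact hlt.ne heq
    · exact absurd (hr _ _ hrel) (not_lt.mpr hlt.le)
  refine ⟨g', ⟨?_, ?_, ?_, ?_, ?_⟩, f, hfinj, fun v => ⟨(hg'mem v.1 v.2).1, hfadj v⟩⟩
  · exact inferInstance
  · intro u hu v hv
    rcases hsub u hu v hv with h1 | ⟨w, hw1, _, h1⟩
    · exact h.notInput u hu v h1
    · exact h.notInput w hw1 v h1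
  · intro u hu v hv
    rcases hsub u hu v hv with h1 | ⟨w, hw1, hw2, h1⟩
    · exact hr _ _ (h.g1 u hu v h1)
    · exact lt_trans hw2 (hr _ _ (h.g1 w hw1 v h1))
  · intro u hu
    rcases (hg'mem u hu).2 with heq | ⟨w, hw1, hw2, heq⟩
    · rw [heq]
      exact h.g2 u hu
    · rw [heq, mem_oddNbhd_symmDiff]
      constructor
      · intro _
        exact hnotmemOddHigh u w hu hw1 hw2
      · intro _
        exact h.g2 u hu
  · intro u hu v hv
    rcases (hg'mem u hu).2 with heq | ⟨w, hw1, hw2, heq⟩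
    · rw [heq] at hv
      rcases h.g3 u hu v hv with heq' | hrel
      · exact Or.inl heq'
      · exact Or.inr (hr _ _ hrel)
    · rw [heq, mem_oddNbhd_symmDiff] at hv
      by_cases h1 : v ∈ oddNbhd G (g u)
      · rcases h.g3 u hu v h1 with heq' | hrel
        · exact Or.inl heq'
        · exact Or.inr (hr _ _ hrel)
      · have h2 : v ∈ oddNbhd G (g w) := by
          by_contra h2
          exact h1 (hv.mpr h2)
        rcases h.g3 w hw1 v h2 with heq' | hrel
        · exact Or.inr (heq' ▸ hw2)
        · exact Or.inr (lt_trans hw2 (hr _ _ hrel))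

lemma exists_linext (r : V → V → Prop) (hs : IsStrictOrder V r) :
    ∃ L : LinearOrder V, ∀ a b, r a b → L.lt a b := by
  classical
  have hirr : ∀ a, ¬ r a a := fun a => hs.toIrrefl.irrefl a
  have htr : ∀ a b c, r a b → r b c → r a c := fun a b c => hs.toIsTrans.trans a b c
  let r0 : V → V → Prop := fun a b => a = b ∨ r a b
  have : IsPartialOrder V r0 :=
    { refl := fun a => Or.inl rfl
      trans := by
        intro a b c hab hbc
        rcases hab with rfl | hab
        · exact hbc
        rcases hbc with rfl | hbc
        · exact Or.inr hab
        · exact Or.inr (htr _ _ _ hab hbc)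
      antisymm := by
        intro a b hab hba
        rcases hab with rfl | hab
        · rfl
        rcases hba with rfl | hba
        · rfl
        · exact absurd (htr _ _ _ hab hba) (hirr a) }
  obtain ⟨s, hlin, hle⟩ := extend_partialOrder r0
  let t : V → V → Prop := fun a b => s a b ∧ a ≠ b
  have htSTO : IsStrictTotalOrder V t :=
    { trichotomous := by
        intro a b hab' hba'
        by_contra hab
        rcases hlin.total a b with hs1 | hs1
        · exact hab' ⟨hs1, hab⟩
        · exact hba' ⟨hs1, Ne.symm hab⟩
      irrefl := fun a ha => ha.2 rfl
      trans := by
        intro a b c hab hbc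
        refine ⟨hlin.trans _ _ _ hab.1 hbc.1, ?_⟩
        rintro rfl
        exact hab.2 (hlin.antisymm _ _ hab.1 hbc.1) }
  letI : DecidableRel t := fun a b => Classical.dec _
  refine ⟨linearOrderOfSTO t, fun a b hab => ?_⟩
  show t a b
  exact ⟨hle a b (Or.inr hab), fun hh => hirr a (hh ▸ hab)⟩

end Helpers

section Paths


def pathFrom {V : Type*} [Fintype V] [DecidableEq V] (ρ : V → ℕ) (nxt : V → Option V) (v : V) : List V :=
  match h : nxt v with
  | none => [v]
  | some w =>
    if hlt : ρ v < ρ w then v :: pathFrom ρ nxt w else [v]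
termination_by (Finset.univ.filter (fun x => ρ v ≤ ρ x)).card
decreasing_by
  apply Finset.card_lt_card
  constructor
  · intro x hx
    simp only [Finset.mem_filter, Finset.mem_univ, true_and] at *
    omega
  · intro hsub
    have hv := hsub (by simp : v ∈ Finset.univ.filter (fun x => ρ v ≤ ρ x))
    simp only [Finset.mem_filter, Finset.mem_univ, true_and] at hv
    omega



section PathLemmas

variable (ρ : V → ℕ) (nxt : V → Option V)
variable (hρ : ∀ v w, nxt v = some w → ρ v < ρ w)

lemma pathFrom_none {v : V} (h : nxt v = none) : pathFrom ρ nxt v = [v] := by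
  rw [pathFrom.eq_def]
  split <;> simp_all

include hρ

lemma pathFrom_some {v w : V} (h : nxt v = some w) :
    pathFrom ρ nxt v = v :: pathFrom ρ nxt w := by
  rw [pathFrom.eq_def]
  split
  next h' => rw [h] at h'; cases h'
  next w' h' =>
    rw [h] at h'
    injection h' with h''
    subst h''
    rw [dif_pos (hρ v w h)]

lemma pathFrom_rec (motive : V → Prop)
    (h1 : ∀ v, nxt v = none → motive v)
    (h2 : ∀ v w, nxt v = some w → motive w → motive v) : ∀ v, motive v := by
  intro v
  have H : ∀ n v, (Finset.univ.filter (fun x => ρ v ≤ ρ x)).card ≤ n → motive v := by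
    intro n
    induction n with
    | zero =>
      intro v hv
      exfalso
      have : v ∈ Finset.univ.filter (fun x => ρ v ≤ ρ x) := by simp
      have := Finset.card_pos.mpr ⟨v, this⟩
      omega
    | succ n ih =>
      intro v hv
      cases h : nxt v with
      | none => exact h1 v h
      | some w =>
        refine h2 v w h (ih w ?_)
        have hlt := hρ v w h
        have : (Finset.univ.filter (fun x => ρ w ≤ ρ x)).card <
            (Finset.univ.filter (fun x => ρ v ≤ ρ x)).card := by
          apply Finset.card_lt_card
          constructor
          · intro x hx
            simp only [Finset.mem_filter, Finset.mem_univ, true_and] at *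
            omega
          · intro hsub
            have hv2 := hsub (by simp : v ∈ Finset.univ.filter (fun x => ρ v ≤ ρ x))
            simp only [Finset.mem_filter, Finset.mem_univ, true_and] at hv2
            omega
        omega
  exact H _ v le_rfl

lemma pathFrom_ne_nil (v : V) : pathFrom ρ nxt v ≠ [] := by
  cases h : nxt v with
  | none => rw [pathFrom_none ρ nxt h]; simp
  | some w => rw [pathFrom_some ρ nxt hρ h]; simp

lemma pathFrom_head (v : V) : (pathFrom ρ nxt v).head? = some v := by
  cases h : nxt v with
  | none => rw [pathFrom_none ρ nxt h]; rfl
  | some w => rw [pathFrom_some ρ nxt hρ h]; rfl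

lemma pathFrom_self_mem (v : V) : v ∈ pathFrom ρ nxt v := by
  cases h : nxt v with
  | none => rw [pathFrom_none ρ nxt h]; simp
  | some w => rw [pathFrom_some ρ nxt hρ h]; simp

lemma pathFrom_mem_rho : ∀ v, ∀ x ∈ pathFrom ρ nxt v, ρ v ≤ ρ x := by
  refine pathFrom_rec ρ nxt hρ _ ?_ ?_
  · intro v h x hx
    rw [pathFrom_none ρ nxt h] at hx
    simp at hx
    subst hx
    exact le_rfl
  · intro v w h ih x hx
    rw [pathFrom_some ρ nxt hρ h] at hx
    rcases List.mem_cons.mp hx with h1 | hx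
    · subst h1; omega
    · have := ih x hx
      have := hρ v w h
      omega

lemma pathFrom_nodup : ∀ v, (pathFrom ρ nxt v).Nodup := by
  refine pathFrom_rec ρ nxt hρ _ ?_ ?_
  · intro v h; rw [pathFrom_none ρ nxt h]; simp
  · intro v w h ih
    rw [pathFrom_some ρ nxt hρ h]
    refine List.nodup_cons.mpr ⟨?_, ih⟩
    intro hmem
    have := pathFrom_mem_rho ρ nxt hρ w v hmem
    have := hρ v w h
    omega

lemma pathFrom_chain' : ∀ v, (pathFrom ρ nxt v).Chain' (fun x y => nxt x = some y) := by
  refine pathFrom_rec ρ nxt hρ _ ?_ ?_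
  · intro v h; rw [pathFrom_none ρ nxt h]; exact List.isChain_singleton v
  · intro v w h ih
    rw [pathFrom_some ρ nxt hρ h]
    refine List.isChain_cons.mpr ⟨?_, ih⟩
    intro y hy
    rw [pathFrom_head ρ nxt hρ] at hy
    cases hy
    exact h

lemma pathFrom_last : ∀ v, ∃ o, (pathFrom ρ nxt v).getLast? = some o ∧ nxt o = none := by
  refine pathFrom_rec ρ nxt hρ _ ?_ ?_
  · intro v h; exact ⟨v, by rw [pathFrom_none ρ nxt h]; rfl, h⟩
  · intro v w h ih
    obtain ⟨o, ho1, ho2⟩ := ih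
    refine ⟨o, ?_, ho2⟩
    obtain ⟨hd, tl, heq⟩ := List.exists_cons_of_ne_nil (pathFrom_ne_nil ρ nxt hρ w)
    rw [pathFrom_some ρ nxt hρ h, heq, List.getLast?_cons_cons, ← heq, ho1]

lemma pathFrom_dropLast : ∀ v, ∀ x ∈ (pathFrom ρ nxt v).dropLast, ∃ y, nxt x = some y := by
  refine pathFrom_rec ρ nxt hρ _ ?_ ?_
  · intro v h x hx; rw [pathFrom_none ρ nxt h] at hx; simp at hx
  · intro v w h ih x hx
    rw [pathFrom_some ρ nxt hρ h] at hx
    rw [List.dropLast_cons_of_ne_nil (pathFrom_ne_nil ρ nxt hρ w)] at hx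
    rcases List.mem_cons.mp hx with rfl | hx
    · exact ⟨w, h⟩
    · exact ih x hx

lemma pathFrom_mem_src : ∀ v, ∀ x ∈ pathFrom ρ nxt v,
    x = v ∨ ∃ u ∈ pathFrom ρ nxt v, nxt u = some x := by
  refine pathFrom_rec ρ nxt hρ _ ?_ ?_
  · intro v h x hx; rw [pathFrom_none ρ nxt h] at hx; simp at hx; exact Or.inl hx
  · intro v w h ih x hx
    rw [pathFrom_some ρ nxt hρ h] at hx
    rcases List.mem_cons.mp hx with rfl | hx
    · exact Or.inl rfl
    · rcases ih x hx with rfl | ⟨u, hu1, hu2⟩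
      · refine Or.inr ⟨v, ?_, h⟩
        rw [pathFrom_some ρ nxt hρ h]
        exact List.mem_cons_self
      · refine Or.inr ⟨u, ?_, hu2⟩
        rw [pathFrom_some ρ nxt hρ h]
        exact List.mem_cons_of_mem v hu1

lemma pathFrom_closure : ∀ v, ∀ u ∈ pathFrom ρ nxt v, ∀ x, nxt u = some x →
    x ∈ pathFrom ρ nxt v := by
  refine pathFrom_rec ρ nxt hρ _ ?_ ?_
  · intro v h u hu x hx
    rw [pathFrom_none ρ nxt h] at hu ⊢
    simp at hu
    subst hu
    rw [h] at hx
    cases hx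
  · intro v w h ih u hu x hx
    rw [pathFrom_some ρ nxt hρ h] at hu ⊢
    rcases List.mem_cons.mp hu with rfl | hu
    · rw [h] at hx
      cases hx
      exact List.mem_cons_of_mem _ (pathFrom_self_mem ρ nxt hρ _)
    · exact List.mem_cons_of_mem _ (ih u hu x hx)

lemma pathFrom_cover : ∀ x, ∃ a, (∀ u, nxt u ≠ some a) ∧ x ∈ pathFrom ρ nxt a := by
  have H : ∀ n x, ρ x < n → ∃ a, (∀ u, nxt u ≠ some a) ∧ x ∈ pathFrom ρ nxt a := by
    intro n
    induction n with
    | zero => intro x hx; omega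
    | succ n ih =>
      intro x hx
      by_cases hstart : ∀ u, nxt u ≠ some x
      · exact ⟨x, hstart, pathFrom_self_mem ρ nxt hρ x⟩
      · push_neg at hstart
        obtain ⟨u, hu⟩ := hstart
        have hlt := hρ u x hu
        obtain ⟨a, ha1, ha2⟩ := ih u (by omega)
        exact ⟨a, ha1, pathFrom_closure ρ nxt hρ a u ha2 x hu⟩
  exact fun x => H (ρ x + 1) x (Nat.lt_succ_self _)

lemma pathFrom_unique (hinj : ∀ u₁ u₂ x, nxt u₁ = some x → nxt u₂ = some x → u₁ = u₂) :
    ∀ x a b, (∀ u, nxt u ≠ some a) → (∀ u, nxt u ≠ some b) →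
      x ∈ pathFrom ρ nxt a → x ∈ pathFrom ρ nxt b → a = b := by
  have H : ∀ n x, ρ x < n → ∀ a b, (∀ u, nxt u ≠ some a) → (∀ u, nxt u ≠ some b) →
      x ∈ pathFrom ρ nxt a → x ∈ pathFrom ρ nxt b → a = b := by
    intro n
    induction n with
    | zero => intro x hx; omega
    | succ n ih =>
      intro x hx a b ha hb hxa hxb
      rcases pathFrom_mem_src ρ nxt hρ a x hxa with h1 | ⟨u1, hu1m, hu1⟩
      · rcases pathFrom_mem_src ρ nxt hρ b x hxb with h2 | ⟨u2, hu2m, hu2⟩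
        · subst h1; exact h2
        · exact absurd (h1 ▸ hu2) (ha u2)
      · rcases pathFrom_mem_src ρ nxt hρ b x hxb with h2 | ⟨u2, hu2m, hu2⟩
        · exact absurd (h2 ▸ hu1) (hb u1)
        · have heq := hinj u1 u2 x hu1 hu2
          subst heq
          have hlt := hρ u1 x hu1
          exact ih u1 (by omega) a b ha hb hu1m hu2m
  exact fun x => H (ρ x + 1) x (Nat.lt_succ_self _)

end PathLemmas

end Paths

theorem gflow_path_cover (G : SimpleGraph V) [DecidableRel G.Adj] (I O : Finset V)
    (g : V → Finset V) (r : V → V → Prop) (h : IsGflow G I O g r) :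
    ∃ P : Finset (List V),
      (∀ l ∈ P, l ≠ [] ∧ l.Nodup ∧ l.Chain' G.Adj) ∧
      (∀ l ∈ P, ∀ l' ∈ P, l ≠ l' → ∀ v, v ∈ l → v ∉ l') ∧
      (∀ v : V, ∃ l ∈ P, v ∈ l) ∧
      (∀ l ∈ P, ∀ v ∈ l.tail, v ∉ I) ∧
      (∀ l ∈ P, (∃ o ∈ O, l.getLast? = some o) ∧ ∀ v ∈ l.dropLast, v ∉ O) ∧
      (∃ g' : V → Finset V, ∃ r' : V → V → Prop, IsGflow G I O g' r' ∧
        ∀ l ∈ P, l.Chain' fun x y => y ∈ g' x) := by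
  classical
  obtain ⟨L, hL⟩ := exists_linext r h.strict
  letI := L
  obtain ⟨g', hg', f, hfinj, hf⟩ := exists_good G I O g r h hL
  set ρ : V → ℕ := fun v => (Finset.univ.filter (fun x => x < v)).card with hρdef
  have hρmono : ∀ a b : V, a < b → ρ a < ρ b := by
    intro a b hab
    apply Finset.card_lt_card
    constructor
    · intro x hx
      simp only [Finset.mem_filter, Finset.mem_univ, true_and] at *
      exact lt_trans hx hab
    · intro hsubs
      have ha : a ∈ Finset.univ.filter (fun x => x < b) := by
        simp only [Finset.mem_filter, Finset.mem_univ, true_and]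
        exact hab
      have := hsubs ha
      simp only [Finset.mem_filter, Finset.mem_univ, true_and] at this
      exact lt_irrefl a this
  set nxt : V → Option V := fun v => if hv : v ∈ O then none else some (f ⟨v, hv⟩) with hnxt
  have hnone : ∀ v, nxt v = none ↔ v ∈ O := by
    intro v
    rw [hnxt]
    by_cases hv : v ∈ O <;> simp [hv]
  have hsome : ∀ v w, nxt v = some w → ∃ hv : v ∉ O, w = f ⟨v, hv⟩ := by
    intro v w hvw
    rw [hnxt] at hvw
    by_cases hv : v ∈ O
    · simp [hv] at hvw
    · simp only [hv, dite_false] at hvw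
      exact ⟨hv, (Option.some_inj.mp hvw).symm⟩
  have hρ : ∀ v w, nxt v = some w → ρ v < ρ w := by
    intro v w hvw
    obtain ⟨hv, rfl⟩ := hsome v w hvw
    exact hρmono _ _ (hg'.g1 v hv _ (hf ⟨v, hv⟩).1)
  have hinj : ∀ u₁ u₂ x, nxt u₁ = some x → nxt u₂ = some x → u₁ = u₂ := by
    intro u₁ u₂ x h1 h2
    obtain ⟨hv1, he1⟩ := hsome u₁ x h1
    obtain ⟨hv2, he2⟩ := hsome u₂ x h2
    have : f ⟨u₁, hv1⟩ = f ⟨u₂, hv2⟩ := by rw [← he1, ← he2]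
    exact congrArg Subtype.val (hfinj this)
  set St : Finset V := Finset.univ.filter (fun a => ∀ u, nxt u ≠ some a) with hSt
  have hStmem : ∀ a, a ∈ St ↔ ∀ u, nxt u ≠ some a := by
    intro a
    rw [hSt]
    simp
  refine ⟨St.image (pathFrom ρ nxt), ?_, ?_, ?_, ?_, ?_, ?_⟩
  · intro l hl
    obtain ⟨a, _, rfl⟩ := Finset.mem_image.mp hl
    refine ⟨pathFrom_ne_nil ρ nxt hρ a, pathFrom_nodup ρ nxt hρ a, ?_⟩
    refine (pathFrom_chain' ρ nxt hρ a).imp ?_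
    intro x y hxy
    obtain ⟨hx, rfl⟩ := hsome x y hxy
    exact (hf ⟨x, hx⟩).2
  · intro l hl l' hl' hne v hv hv'
    obtain ⟨a, ha, rfl⟩ := Finset.mem_image.mp hl
    obtain ⟨b, hb, rfl⟩ := Finset.mem_image.mp hl'
    have := pathFrom_unique ρ nxt hρ hinj v a b ((hStmem a).mp ha) ((hStmem b).mp hb) hv hv'
    exact hne (by rw [this])
  · intro v
    obtain ⟨a, ha1, ha2⟩ := pathFrom_cover ρ nxt hρ v
    exact ⟨pathFrom ρ nxt a, Finset.mem_image_of_mem _ ((hStmem a).mpr ha1), ha2⟩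
  · intro l hl v hv
    obtain ⟨a, _, rfl⟩ := Finset.mem_image.mp hl
    have hvl : v ∈ pathFrom ρ nxt a := List.mem_of_mem_tail hv
    have hcons : a :: (pathFrom ρ nxt a).tail = pathFrom ρ nxt a :=
      List.cons_head?_tail (by rw [pathFrom_head ρ nxt hρ a]; rfl)
    have hanotail : a ∉ (pathFrom ρ nxt a).tail := by
      have hnd := pathFrom_nodup ρ nxt hρ a
      rw [← hcons] at hnd
      exact (List.nodup_cons.mp hnd).1
    rcases pathFrom_mem_src ρ nxt hρ a v hvl with h1 | ⟨u, _, hu⟩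
    · exact absurd (h1 ▸ hv) hanotail
    · obtain ⟨hunotO, rfl⟩ := hsome u v hu
      exact hg'.notInput u hunotO _ (hf ⟨u, hunotO⟩).1
  · intro l hl
    obtain ⟨a, _, rfl⟩ := Finset.mem_image.mp hl
    constructor
    · obtain ⟨o, ho1, ho2⟩ := pathFrom_last ρ nxt hρ a
      exact ⟨o, (hnone o).mp ho2, ho1⟩
    · intro v hv
      obtain ⟨y, hy⟩ := pathFrom_dropLast ρ nxt hρ a v hv
      obtain ⟨hvnotO, _⟩ := hsome v y hy
      exact hvnotO
  · refine ⟨g', (· < ·), hg', ?_⟩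
    intro l hl
    obtain ⟨a, _, rfl⟩ := Finset.mem_image.mp hl
    refine (pathFrom_chain' ρ nxt hρ a).imp ?_
    intro x y hxy
    obtain ⟨hx, rfl⟩ := hsome x y hxy
    exact (hf ⟨x, hx⟩).1
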